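/- arXiv:2507.23494 — 2 statements merged into one kernel-verified Lean document; each statement's English description precedes it below -/
import Mathlib

section
/- Let 𝓛 : ℝ^d → ℝ be a continuous positive definite function with support contained in [−1/2, 1/2]^d. Define 𝓗 on the torus 𝕋^d = ℝ^d/ℤ^d by 𝓗(t mod ℤ^d) := 𝓛(t) for t ∈ [−1/2, 1/2)^d. Then 𝓗 is a positive definite function on 𝕋^d. -/
open Complex Finset Filter Topology

private lemma vanish_aux (d : ℕ) (L : (Fin d → ℝ) → ℝ)
    (hcont : Continuous L)
    (hsupp : ∀ t : Fin d → ℝ,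
      t ∉ Set.Icc (fun _ => -(1 / 2 : ℝ)) (fun _ => (1 / 2 : ℝ)) → L t = 0)
    (s : Fin d → ℝ) (a : Fin d) (ha : 1 / 2 ≤ |s a|) : L s = 0 := by
  have hstrict : ∀ u : Fin d → ℝ, 1 / 2 < |u a| → L u = 0 := by
    intro u hu
    apply hsupp
    intro hmem
    rw [Set.mem_Icc] at hmem
    have h1 : -(1/2 : ℝ) ≤ u a := hmem.1 a
    have h2 : u a ≤ (1/2 : ℝ) := hmem.2 a
    have : |u a| ≤ 1/2 := abs_le.mpr ⟨h1, h2⟩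
    linarith
  set u : ℕ → (Fin d → ℝ) := fun nn b => if b = a then s a * (1 + 1/(nn+1)) else s b with hu
  have hLu : ∀ nn : ℕ, L (u nn) = 0 := by
    intro nn
    apply hstrict
    have hua : u nn a = s a * (1 + 1/((nn:ℝ)+1)) := by simp [hu]
    have hpos : (0:ℝ) < 1/((nn:ℝ)+1) := by positivity
    rw [hua, abs_mul, abs_of_pos (by positivity : (0:ℝ) < 1 + 1/((nn:ℝ)+1))]
    nlinarith [abs_nonneg (s a)]
  have hlim : Tendsto u atTop (𝓝 s) := by
    rw [tendsto_pi_nhds]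
    intro b
    by_cases hb : b = a
    · subst hb
      have hfun : (fun nn : ℕ => u nn b) = fun nn : ℕ => s b * (1 + 1/((nn:ℝ)+1)) := by
        funext nn; simp [hu]
      rw [hfun]
      have h1 : Tendsto (fun nn : ℕ => 1 + 1/((nn:ℝ)+1)) atTop (𝓝 1) := by
        simpa using (tendsto_const_nhds : Tendsto (fun _ : ℕ => (1:ℝ)) atTop (𝓝 1)).add tendsto_one_div_add_atTop_nhds_zero_nat
      simpa using tendsto_const_nhds.mul h1
    · have hfun : (fun nn : ℕ => u nn b) = fun _ : ℕ => s b := by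
        funext nn; simp [hu, hb]
      rw [hfun]
      exact tendsto_const_nhds
  have h := (hcont.tendsto s).comp hlim
  have h2 : Tendsto (fun _ : ℕ => (0:ℝ)) atTop (𝓝 (L s)) :=
    h.congr fun nn => hLu nn
  exact (tendsto_nhds_unique h2 tendsto_const_nhds)

private def cntR (N : ℕ) (m : ℤ) : ℝ :=
  ∑ u : Fin N, ∑ v : Fin N, if ((u:ℕ):ℤ) - ((v:ℕ):ℤ) = m then (1:ℝ) else 0

private lemma cnt_inner (N : ℕ) (m : ℤ) (u : Fin N) :
    (∑ v : Fin N, if ((u:ℕ):ℤ) - ((v:ℕ):ℤ) = m then (1:ℝ) else 0)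
      = if 0 ≤ ((u:ℕ):ℤ) - m ∧ ((u:ℕ):ℤ) - m < N then 1 else 0 := by
  by_cases h : 0 ≤ ((u:ℕ):ℤ) - m ∧ ((u:ℕ):ℤ) - m < N
  · rw [if_pos h]
    have hlt : (((u:ℕ):ℤ) - m).toNat < N := by omega
    rw [Finset.sum_eq_single (⟨(((u:ℕ):ℤ) - m).toNat, hlt⟩ : Fin N)]
    · rw [if_pos]
      show ((u:ℕ):ℤ) - (((((u:ℕ):ℤ) - m).toNat : ℕ) : ℤ) = m
      omega
    · intro v _ hv
      rw [if_neg]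
      intro hc
      apply hv
      apply Fin.ext
      show (v:ℕ) = (((u:ℕ):ℤ) - m).toNat
      omega
    · intro hmem; exact absurd (Finset.mem_univ _) hmem
  · rw [if_neg h]
    apply Finset.sum_eq_zero
    intro v _
    rw [if_neg]
    intro hc
    have := v.isLt
    omega

private lemma cntR_nonneg (N : ℕ) (m : ℤ) : 0 ≤ cntR N m := by
  apply Finset.sum_nonneg; intro u _; apply Finset.sum_nonneg; intro v _
  split <;> norm_num

private lemma cntR_le (N : ℕ) (m : ℤ) : cntR N m ≤ N := by
  unfold cntR
  calc (∑ u : Fin N, ∑ v : Fin N, if ((u:ℕ):ℤ) - ((v:ℕ):ℤ) = m then (1:ℝ) else 0)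
      ≤ ∑ _u : Fin N, (1:ℝ) := by
        apply Finset.sum_le_sum; intro u _; rw [cnt_inner]
        split <;> norm_num
    _ = N := by simp

private lemma cntR_ge (N : ℕ) (hN : 1 ≤ N) (m : ℤ) (hm1 : -1 ≤ m) (hm2 : m ≤ 1) :
    (N:ℝ) - 1 ≤ cntR N m := by
  unfold cntR
  have h1 : ∀ u : Fin N, (∑ v : Fin N, if ((u:ℕ):ℤ) - ((v:ℕ):ℤ) = m then (1:ℝ) else 0)
      = 1 - (if ¬(0 ≤ ((u:ℕ):ℤ) - m ∧ ((u:ℕ):ℤ) - m < N) then (1:ℝ) else 0) := by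
    intro u; rw [cnt_inner]
    by_cases h : 0 ≤ ((u:ℕ):ℤ) - m ∧ ((u:ℕ):ℤ) - m < N
    · rw [if_pos h, if_neg (not_not_intro h)]; norm_num
    · rw [if_neg h, if_pos h]; norm_num
  rw [Finset.sum_congr rfl fun u _ => h1 u, Finset.sum_sub_distrib]
  simp only [Finset.sum_const, Finset.card_univ, Fintype.card_fin, nsmul_eq_mul, mul_one]
  have hcard : (Finset.univ.filter
      fun u : Fin N => ¬(0 ≤ ((u:ℕ):ℤ) - m ∧ ((u:ℕ):ℤ) - m < N)).card ≤ 1 := by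
    apply Finset.card_le_one.mpr
    intro u hu u' hu'
    simp only [Finset.mem_filter, Finset.mem_univ, true_and] at hu hu'
    have h1 := u.isLt
    have h2 := u'.isLt
    apply Fin.ext
    omega
  have hbad : (∑ u : Fin N, if ¬(0 ≤ ((u:ℕ):ℤ) - m ∧ ((u:ℕ):ℤ) - m < N)
      then (1:ℝ) else 0) ≤ 1 := by
    rw [Finset.sum_boole]
    exact_mod_cast hcard
  linarith

/-- If `𝓛` is a continuous positive definite function on `ℝ^d` supported in
`[-1/2, 1/2]^d`, then its transplant `𝓗` to the torus `𝕋^d = ℝ^d/ℤ^d`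
(defined by `𝓗(t mod ℤ^d) = 𝓛(t)` for `t ∈ [-1/2, 1/2)^d`) is positive definite. -/
theorem stmt3 (d : ℕ) (L : (Fin d → ℝ) → ℝ) (H : (Fin d → AddCircle (1 : ℝ)) → ℝ)
    (hcont : Continuous L)
    (hpd : ∀ (n : ℕ) (x : Fin n → (Fin d → ℝ)) (c : Fin n → ℂ),
      0 ≤ (∑ i, ∑ j, c i * (starRingEnd ℂ) (c j) * (L (x i - x j) : ℂ)).re)
    (hsupp : ∀ t : Fin d → ℝ,
      t ∉ Set.Icc (fun _ => -(1 / 2 : ℝ)) (fun _ => (1 / 2 : ℝ)) → L t = 0)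
    (hH : ∀ t : Fin d → ℝ, (∀ i, t i ∈ Set.Ico (-(1 / 2) : ℝ) (1 / 2)) →
      H (fun i => (t i : AddCircle (1 : ℝ))) = L t) :
    ∀ (n : ℕ) (x : Fin n → (Fin d → AddCircle (1 : ℝ))) (c : Fin n → ℂ),
      0 ≤ (∑ i, ∑ j, c i * (starRingEnd ℂ) (c j) * (H (x i - x j) : ℂ)).re := by
  intro n x c
  haveI : Fact ((0:ℝ) < 1) := ⟨one_pos⟩
  have hvan : ∀ (s : Fin d → ℝ) (a : Fin d), 1/2 ≤ |s a| → L s = 0 :=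
    fun s a ha => vanish_aux d L hcont hsupp s a ha
  set q : AddCircle (1:ℝ) → ℝ := fun y => ((AddCircle.equivIco 1 (-(1/2)) y : ℝ)) with hqdef
  have hqmem : ∀ y, -(1/2:ℝ) ≤ q y ∧ q y < 1/2 := by
    intro y
    have h := (AddCircle.equivIco 1 (-(1/2)) y).2
    rw [Set.mem_Ico] at h
    refine ⟨h.1, ?_⟩
    have h2 := h.2
    norm_num at h2 ⊢
    linarith
  have hqcoe : ∀ y : AddCircle (1:ℝ), ((q y : ℝ) : AddCircle (1:ℝ)) = y := fun y =>
    (AddCircle.equivIco 1 (-(1/2))).symm_apply_apply y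
  set t : Fin n → Fin d → ℝ := fun i a => q (x i a) with htdef
  set r : Fin n → Fin n → Fin d → ℝ := fun i j a => q (x i a - x j a) with hrdef
  have hHr : ∀ i j, H (x i - x j) = L (r i j) := by
    intro i j
    have h1 : (fun a => ((r i j a : ℝ) : AddCircle (1:ℝ))) = x i - x j := by
      funext a
      show ((q (x i a - x j a) : ℝ) : AddCircle (1:ℝ)) = (x i - x j) a
      rw [hqcoe]
      rfl
    have h2 := hH (r i j) (fun a => Set.mem_Ico.mpr ⟨(hqmem _).1, (hqmem _).2⟩)
    rw [h1] at h2
    exact h2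
  have hzex : ∀ (i j : Fin n) (a : Fin d),
      ∃ zz : ℤ, (zz : ℝ) = r i j a - (t i a - t j a) := by
    intro i j a
    have hc : ((r i j a - (t i a - t j a) : ℝ) : AddCircle (1:ℝ)) = 0 := by
      rw [QuotientAddGroup.mk_sub, QuotientAddGroup.mk_sub]
      show (q (x i a - x j a) : AddCircle (1:ℝ)) - ((q (x i a) : AddCircle (1:ℝ)) - (q (x j a) : AddCircle (1:ℝ))) = 0
      rw [hqcoe, hqcoe, hqcoe]
      abel
    rw [AddCircle.coe_eq_zero_iff] at hc
    obtain ⟨zz, hzz⟩ := hc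
    exact ⟨zz, by simpa using hzz⟩
  choose z hz using hzex
  have hzb : ∀ (i j : Fin n) (a : Fin d), -1 ≤ z i j a ∧ z i j a ≤ 1 := by
    intro i j a
    have h := hz i j a
    have hr1 := hqmem (x i a - x j a)
    have ht1 := hqmem (x i a)
    have ht2 := hqmem (x j a)
    have hrr : r i j a = q (x i a - x j a) := rfl
    have htt1 : t i a = q (x i a) := rfl
    have htt2 : t j a = q (x j a) := rfl
    rw [hrr, htt1, htt2] at h
    have hlt : ((z i j a : ℤ) : ℝ) < 2 := by rw [h]; linarith [hr1.1, hr1.2, ht1.1, ht1.2, ht2.1, ht2.2]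
    have hgt : (-2 : ℝ) < ((z i j a : ℤ) : ℝ) := by rw [h]; linarith [hr1.1, hr1.2, ht1.1, ht1.2, ht2.1, ht2.2]
    have h1 : z i j a < 2 := by exact_mod_cast hlt
    have h2 : -2 < z i j a := by exact_mod_cast hgt
    omega
  set g : Fin n → Fin n → ℝ := fun i j => (c i * (starRingEnd ℂ) (c j)).re with hgdef
  set A : Fin n → Fin n → ℝ := fun i j => g i j * L (r i j) with hAdef
  set W : Fin n → Fin n → ℕ → ℝ := fun i j N => ∏ a : Fin d, cntR N (z i j a) with hWdef
  -- per pair sum identity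
  have hpair : ∀ (N : ℕ) (i j : Fin n),
      (∑ k : Fin d → Fin N, ∑ l : Fin d → Fin N,
        L (fun a => t i a + ((k a : ℕ):ℝ) - (t j a + ((l a : ℕ):ℝ))))
      = W i j N * L (r i j) := by
    intro N i j
    have hterm : ∀ k l : Fin d → Fin N,
        L (fun a => t i a + ((k a : ℕ):ℝ) - (t j a + ((l a : ℕ):ℝ)))
          = (∏ a : Fin d, if (((k a : ℕ):ℤ) - ((l a : ℕ):ℤ) = z i j a)
              then (1:ℝ) else 0) * L (r i j) := by
      intro k l
      by_cases hkl : ∀ a, ((k a : ℕ):ℤ) - ((l a : ℕ):ℤ) = z i j a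
      · have hprod : (∏ a : Fin d, if (((k a : ℕ):ℤ) - ((l a : ℕ):ℤ) = z i j a)
            then (1:ℝ) else 0) = 1 :=
          Finset.prod_eq_one fun a _ => if_pos (hkl a)
        rw [hprod, one_mul]
        congr 1
        funext a
        have h := hz i j a
        have hc : (((k a : ℕ):ℝ)) - ((l a : ℕ):ℝ) = ((z i j a : ℤ) : ℝ) := by
          exact_mod_cast congrArg (fun w : ℤ => (w:ℝ)) (hkl a)
        linarith [h, hc]
      · push_neg at hkl
        obtain ⟨a0, ha0⟩ := hkl
        have hprod : (∏ a : Fin d, if (((k a : ℕ):ℤ) - ((l a : ℕ):ℤ) = z i j a)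
            then (1:ℝ) else 0) = 0 :=
          Finset.prod_eq_zero (Finset.mem_univ a0) (if_neg ha0)
        rw [hprod, zero_mul]
        apply hvan _ a0
        have h := hz i j a0
        have hw0 : ((k a0 : ℕ):ℤ) - ((l a0 : ℕ):ℤ) - z i j a0 ≠ 0 := sub_ne_zero.mpr ha0
        have hw1 : (1:ℝ) ≤ |((((k a0 : ℕ):ℤ) - ((l a0 : ℕ):ℤ) - z i j a0 : ℤ) : ℝ)| := by
          have h1 : 1 ≤ |((k a0 : ℕ):ℤ) - ((l a0 : ℕ):ℤ) - z i j a0| := Int.one_le_abs hw0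
          calc (1:ℝ) = ((1:ℤ):ℝ) := by norm_num
            _ ≤ ((|((k a0 : ℕ):ℤ) - ((l a0 : ℕ):ℤ) - z i j a0| : ℤ) : ℝ) := by exact_mod_cast h1
            _ = |((((k a0 : ℕ):ℤ) - ((l a0 : ℕ):ℤ) - z i j a0 : ℤ) : ℝ)| := by
                rw [Int.cast_abs]
        have harg : t i a0 + ((k a0 : ℕ):ℝ) - (t j a0 + ((l a0 : ℕ):ℝ))
            = r i j a0 + ((((k a0 : ℕ):ℤ) - ((l a0 : ℕ):ℤ) - z i j a0 : ℤ) : ℝ) := by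
          push_cast
          linarith [h]
        rw [harg]
        have hrmem := hqmem (x i a0 - x j a0)
        have habsr : |r i j a0| ≤ 1/2 := by
          have hrr : r i j a0 = q (x i a0 - x j a0) := rfl
          rw [hrr]
          exact abs_le.mpr ⟨hrmem.1, le_of_lt hrmem.2⟩
        set wr : ℝ := ((((k a0 : ℕ):ℤ) - ((l a0 : ℕ):ℤ) - z i j a0 : ℤ) : ℝ)
        have key : |wr| ≤ |r i j a0 + wr| + |r i j a0| := by
          have h1 := abs_add_le (r i j a0 + wr) (-(r i j a0))
          rw [abs_neg] at h1
          have h2 : r i j a0 + wr + -(r i j a0) = wr := by ring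
          rw [h2] at h1
          exact h1
        linarith
    rw [Finset.sum_congr rfl fun k (_ : k ∈ Finset.univ) =>
      Finset.sum_congr rfl fun l (_ : l ∈ Finset.univ) => hterm k l]
    have hstep1 : ∀ k : Fin d → Fin N,
        (∑ l : Fin d → Fin N, ∏ a : Fin d,
          if (((k a : ℕ):ℤ) - ((l a : ℕ):ℤ) = z i j a) then (1:ℝ) else 0)
        = ∏ a : Fin d, ∑ v : Fin N,
            if (((k a : ℕ):ℤ) - ((v:ℕ):ℤ) = z i j a) then (1:ℝ) else 0 := by
      intro k
      exact (Fintype.prod_sum fun a (v : Fin N) =>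
        if (((k a : ℕ):ℤ) - ((v:ℕ):ℤ) = z i j a) then (1:ℝ) else 0).symm
    calc (∑ k : Fin d → Fin N, ∑ l : Fin d → Fin N,
          (∏ a : Fin d, if (((k a : ℕ):ℤ) - ((l a : ℕ):ℤ) = z i j a)
            then (1:ℝ) else 0) * L (r i j))
        = (∑ k : Fin d → Fin N, ∑ l : Fin d → Fin N,
          ∏ a : Fin d, if (((k a : ℕ):ℤ) - ((l a : ℕ):ℤ) = z i j a)
            then (1:ℝ) else 0) * L (r i j) := by
          rw [Finset.sum_mul]
          refine Finset.sum_congr rfl fun k _ => ?_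
          rw [Finset.sum_mul]
      _ = (∑ k : Fin d → Fin N, ∏ a : Fin d, ∑ v : Fin N,
            if (((k a : ℕ):ℤ) - ((v:ℕ):ℤ) = z i j a) then (1:ℝ) else 0) * L (r i j) := by
          rw [Finset.sum_congr rfl fun k (_ : k ∈ Finset.univ) => hstep1 k]
      _ = W i j N * L (r i j) := by
          congr 1
          exact (Fintype.prod_sum fun (a : Fin d) (u : Fin N) =>
            ∑ v : Fin N, if (((u:ℕ):ℤ) - ((v:ℕ):ℤ) = z i j a) then (1:ℝ) else 0).symm
  -- nonnegativity for each N ≥ 1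
  have hmain : ∀ N : ℕ, 1 ≤ N →
      0 ≤ ∑ i : Fin n, ∑ j : Fin n, A i j * (W i j N / (N:ℝ)^d) := by
    intro N hN
    set X : (Fin n × (Fin d → Fin N)) → (Fin d → ℝ) :=
      fun p a => t p.1 a + ((p.2 a : ℕ):ℝ) with hXdef
    set C : (Fin n × (Fin d → Fin N)) → ℂ := fun p => c p.1 with hCdef
    set e := Fintype.equivFin (Fin n × (Fin d → Fin N)) with hedef
    have h0 := hpd (Fintype.card (Fin n × (Fin d → Fin N)))
      (fun i => X (e.symm i)) (fun i => C (e.symm i))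
    have heq : (∑ i, ∑ j, C (e.symm i) * (starRingEnd ℂ) (C (e.symm j))
          * ((L (X (e.symm i) - X (e.symm j)) : ℝ) : ℂ)).re
        = ∑ p : Fin n × (Fin d → Fin N), ∑ p2 : Fin n × (Fin d → Fin N),
            (C p * (starRingEnd ℂ) (C p2)).re * L (X p - X p2) := by
      rw [Complex.re_sum]
      rw [← Equiv.sum_comp e.symm (fun p => ∑ p2 : Fin n × (Fin d → Fin N),
        (C p * (starRingEnd ℂ) (C p2)).re * L (X p - X p2))]
      refine Finset.sum_congr rfl fun i _ => ?_
      rw [Complex.re_sum]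
      rw [← Equiv.sum_comp e.symm (fun p2 =>
        (C (e.symm i) * (starRingEnd ℂ) (C p2)).re * L (X (e.symm i) - X p2))]
      refine Finset.sum_congr rfl fun j _ => ?_
      simp [Complex.mul_re]
    rw [heq] at h0
    have h1 : (∑ p : Fin n × (Fin d → Fin N), ∑ p2 : Fin n × (Fin d → Fin N),
          (C p * (starRingEnd ℂ) (C p2)).re * L (X p - X p2))
        = ∑ i : Fin n, ∑ j : Fin n, g i j * (W i j N * L (r i j)) := by
      rw [Fintype.sum_prod_type]
      refine Finset.sum_congr rfl fun i _ => ?_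
      calc (∑ k : Fin d → Fin N, ∑ p2 : Fin n × (Fin d → Fin N),
            (C (i, k) * (starRingEnd ℂ) (C p2)).re * L (X (i,k) - X p2))
          = ∑ k : Fin d → Fin N, ∑ j : Fin n, ∑ l : Fin d → Fin N,
              g i j * L (X (i,k) - X (j,l)) := by
            refine Finset.sum_congr rfl fun k _ => ?_
            rw [Fintype.sum_prod_type]
        _ = ∑ j : Fin n, ∑ k : Fin d → Fin N, ∑ l : Fin d → Fin N,
              g i j * L (X (i,k) - X (j,l)) := Finset.sum_comm
        _ = ∑ j : Fin n, g i j * (W i j N * L (r i j)) := by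
            refine Finset.sum_congr rfl fun j _ => ?_
            calc (∑ k : Fin d → Fin N, ∑ l : Fin d → Fin N, g i j * L (X (i,k) - X (j,l)))
                = g i j * ∑ k : Fin d → Fin N, ∑ l : Fin d → Fin N, L (X (i,k) - X (j,l)) := by
                  rw [Finset.mul_sum]
                  refine Finset.sum_congr rfl fun k _ => ?_
                  rw [Finset.mul_sum]
              _ = g i j * (W i j N * L (r i j)) := by
                  congr 1
                  exact hpair N i j
    rw [h1] at h0
    have hNpos : (0:ℝ) < (N:ℝ)^d := by
      have : (0:ℝ) < (N:ℝ) := by exact_mod_cast hN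
      positivity
    have hdiv : 0 ≤ (∑ i : Fin n, ∑ j : Fin n, g i j * (W i j N * L (r i j))) / (N:ℝ)^d :=
      div_nonneg h0 (le_of_lt hNpos)
    have hgoal : (∑ i : Fin n, ∑ j : Fin n, A i j * (W i j N / (N:ℝ)^d))
        = (∑ i : Fin n, ∑ j : Fin n, g i j * (W i j N * L (r i j))) / (N:ℝ)^d := by
      rw [Finset.sum_div]
      refine Finset.sum_congr rfl fun i _ => ?_
      rw [Finset.sum_div]
      refine Finset.sum_congr rfl fun j _ => ?_
      show (g i j * L (r i j)) * (W i j N / (N:ℝ)^d) = _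
      ring
    rw [hgoal]
    exact hdiv
  -- bounds on W
  have hWle : ∀ (N : ℕ) (i j : Fin n), W i j N ≤ (N:ℝ)^d := by
    intro N i j
    have h := Finset.prod_le_prod (s := Finset.univ)
      (f := fun a : Fin d => cntR N (z i j a)) (g := fun _ => (N:ℝ))
      (fun a _ => cntR_nonneg N _) (fun a _ => cntR_le N _)
    simpa using h
  have hWge : ∀ (N : ℕ), 1 ≤ N → ∀ (i j : Fin n), ((N:ℝ) - 1)^d ≤ W i j N := by
    intro N hN i j
    have hN1 : (1:ℝ) ≤ (N:ℝ) := by exact_mod_cast hN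
    have h := Finset.prod_le_prod (s := Finset.univ)
      (f := fun _ : Fin d => (N:ℝ) - 1) (g := fun a : Fin d => cntR N (z i j a))
      (fun a _ => by show (0:ℝ) ≤ (N:ℝ) - 1; linarith)
      (fun a _ => cntR_ge N hN _ (hzb i j a).1 (hzb i j a).2)
    simpa using h
  have hWnonneg : ∀ (N : ℕ) (i j : Fin n), 0 ≤ W i j N := by
    intro N i j
    exact Finset.prod_nonneg fun a _ => cntR_nonneg N _
  -- limit
  have hwtend : ∀ i j : Fin n, Tendsto (fun N : ℕ => W i j N / (N:ℝ)^d) atTop (𝓝 1) := by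
    intro i j
    have hlow : Tendsto (fun N : ℕ => (1 - 1/(N:ℝ))^d) atTop (𝓝 1) := by
      have h1 : Tendsto (fun N : ℕ => 1 - 1/(N:ℝ)) atTop (𝓝 1) := by
        simpa using (tendsto_const_nhds : Tendsto (fun _ : ℕ => (1:ℝ)) atTop (𝓝 1)).sub tendsto_one_div_atTop_nhds_zero_nat
      simpa using h1.pow d
    refine tendsto_of_tendsto_of_tendsto_of_le_of_le' hlow tendsto_const_nhds ?_ ?_
    · filter_upwards [eventually_ge_atTop 1] with N hN
      have hNpos : (0:ℝ) < (N:ℝ) := by exact_mod_cast hN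
      have hexp : (1 - 1/(N:ℝ))^d = ((N:ℝ)-1)^d / (N:ℝ)^d := by
        rw [← div_pow]
        congr 1
        field_simp
      rw [hexp]
      have h2 := hWge N hN i j
      gcongr
    · filter_upwards [eventually_ge_atTop 1] with N hN
      have hNpos : (0:ℝ) < (N:ℝ) := by exact_mod_cast hN
      have hNpow : (0:ℝ) < (N:ℝ)^d := by positivity
      exact (div_le_one hNpow).mpr (hWle N i j)
  have htend : Tendsto (fun N : ℕ => ∑ i : Fin n, ∑ j : Fin n, A i j * (W i j N / (N:ℝ)^d))
      atTop (𝓝 (∑ i : Fin n, ∑ j : Fin n, A i j)) := by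
    apply tendsto_finset_sum
    intro i _
    have h1 : Tendsto (fun N : ℕ => ∑ j : Fin n, A i j * (W i j N / (N:ℝ)^d))
        atTop (𝓝 (∑ j : Fin n, A i j)) := by
      apply tendsto_finset_sum
      intro j _
      have h2 := (hwtend i j).const_mul (A i j)
      simpa using h2
    exact h1
  have hfinal : 0 ≤ ∑ i : Fin n, ∑ j : Fin n, A i j :=
    ge_of_tendsto htend (eventually_atTop.mpr ⟨1, fun N hN => hmain N hN⟩)
  have hgoal2 : (∑ i, ∑ j, c i * (starRingEnd ℂ) (c j) * ((H (x i - x j) : ℝ) : ℂ)).re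
      = ∑ i : Fin n, ∑ j : Fin n, A i j := by
    rw [Complex.re_sum]
    refine Finset.sum_congr rfl fun i _ => ?_
    rw [Complex.re_sum]
    refine Finset.sum_congr rfl fun j _ => ?_
    rw [hHr i j]
    show (c i * (starRingEnd ℂ) (c j) * ((L (r i j) : ℝ) : ℂ)).re = g i j * L (r i j)
    simp [Complex.mul_re, hgdef]
  rw [hgoal2]
  exact hfinal
end

section
/- Let (Y_k)_{k=0}^m be independent centered real random variables in L^p(ℙ) for some 1 < p ≤ 2. Then E[|∑_{k=0}^m Y_k|^p] ≤ C(p) ∑_{k=0}^m E[|Y_k|^p], where C(p) depends only on p. -/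
open MeasureTheory ProbabilityTheory
open scoped NNReal ENNReal

lemma my_rpow_sub_le {α : ℝ} (h0 : 0 < α) (h1 : α ≤ 1) {a b : ℝ} (ha : 0 ≤ a) (hb : 0 ≤ b)
    (hba : b ≤ a) : a ^ α - b ^ α ≤ (a - b) ^ α := by
  have key : ∀ u v : ℝ, 0 ≤ u → 0 ≤ v → (u + v) ^ α ≤ u ^ α + v ^ α := by
    intro u v hu hv
    have := NNReal.rpow_add_le_add_rpow u.toNNReal v.toNNReal h0.le h1
    have h2 : ((u.toNNReal + v.toNNReal : ℝ≥0) : ℝ) = u + v := by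
      simp [Real.toNNReal_of_nonneg, hu, hv]
    calc (u + v) ^ α = ((u.toNNReal + v.toNNReal : ℝ≥0) : ℝ) ^ α := by rw [h2]
    _ = ((u.toNNReal + v.toNNReal : ℝ≥0) ^ α : ℝ≥0) := by rw [NNReal.coe_rpow]
    _ ≤ ((u.toNNReal ^ α + v.toNNReal ^ α : ℝ≥0) : ℝ) := by exact_mod_cast this
    _ = u ^ α + v ^ α := by
        push_cast [NNReal.coe_rpow]
        rw [Real.coe_toNNReal u hu, Real.coe_toNNReal v hv]
  have := key (a - b) b (by linarith) hb
  have h3 : a - b + b = a := by ring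
  rw [h3] at this
  linarith

lemma my_abs_rpow_sub_le {α : ℝ} (h0 : 0 < α) (h1 : α ≤ 1) {a b : ℝ} (ha : 0 ≤ a) (hb : 0 ≤ b) :
    |a ^ α - b ^ α| ≤ |a - b| ^ α := by
  rcases le_total b a with h | h
  · rw [abs_of_nonneg (sub_nonneg.2 h), abs_of_nonneg
      (sub_nonneg.2 (Real.rpow_le_rpow hb h h0.le))]
    exact my_rpow_sub_le h0 h1 ha hb h
  · rw [abs_of_nonpos (by linarith : a - b ≤ 0), abs_of_nonpos
      (sub_nonpos.2 (Real.rpow_le_rpow ha h h0.le)), neg_sub, neg_sub]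
    exact my_rpow_sub_le h0 h1 hb ha h

lemma my_key_pos {p : ℝ} (hp1 : 1 < p) (hp2 : p ≤ 2) {x y : ℝ} (hx : 0 < x) (hy : |y| < x) :
    |x + y| ^ p ≤ |x| ^ p + (p * x * |x| ^ (p - 2)) * y + 2 * |y| ^ p := by
  have hxy : 0 < x + y := by
    have := neg_abs_le y; linarith
  have hax : |x| = x := abs_of_pos hx
  have hgx : p * x * |x| ^ (p - 2) = p * x ^ (p - 1) := by
    rw [hax, mul_assoc]
    congr 1
    rw [← Real.rpow_one_add' (le_of_lt hx) (by intro h; linarith : (1:ℝ) + (p-2) ≠ 0),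
      show (1:ℝ) + (p-2) = p - 1 by ring]
  rw [abs_of_pos hxy, hgx, hax]
  -- main claim
  rcases eq_or_ne y 0 with rfl | hy0
  · simp [abs_zero, Real.zero_rpow (by positivity : p ≠ 0)]
  have hMVT : ∃ ξ : ℝ, 0 < ξ ∧ |ξ - x| ≤ |y| ∧
      (x + y) ^ p - x ^ p = p * ξ ^ (p - 1) * y := by
    have hderiv : ∀ t : ℝ, HasDerivAt (fun s : ℝ => s ^ p) (p * t ^ (p - 1)) t :=
      fun t => Real.hasDerivAt_rpow_const (Or.inr hp1.le)
    rcases lt_or_gt_of_ne hy0 with hneg | hpos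
    · have hab : x + y < x := by linarith
      obtain ⟨ξ, hξ, hslope⟩ := exists_hasDerivAt_eq_slope (fun s : ℝ => s ^ p)
        (fun t => p * t ^ (p - 1)) hab
        (fun t _ => (hderiv t).continuousAt.continuousWithinAt)
        (fun t _ => hderiv t)
      refine ⟨ξ, by have := hξ.1; linarith, ?_, ?_⟩
      · rw [abs_of_nonpos (by have := hξ.2; linarith), abs_of_neg hneg]
        have := hξ.1; linarith
      · have hslope' : p * ξ ^ (p - 1) = (x ^ p - (x + y) ^ p) / (x - (x + y)) := hslope
        rw [show x - (x + y) = -y by ring,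
          eq_div_iff (by simpa using hy0 : -y ≠ 0)] at hslope'
        linear_combination hslope'

    · obtain ⟨ξ, hξ, hslope⟩ := exists_hasDerivAt_eq_slope (fun s : ℝ => s ^ p)
        (fun t => p * t ^ (p - 1)) (by linarith : x < x + y)
        (fun t _ => (hderiv t).continuousAt.continuousWithinAt)
        (fun t _ => hderiv t)
      refine ⟨ξ, by have := hξ.1; linarith, ?_, ?_⟩
      · rw [abs_of_nonneg (by have := hξ.1; linarith), abs_of_pos hpos]
        have := hξ.2; linarith
      · have hslope' : p * ξ ^ (p - 1) = ((x + y) ^ p - x ^ p) / (x + y - x) := hslope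
        rw [show x + y - x = y by ring, eq_div_iff hy0] at hslope'
        linear_combination -hslope'

  obtain ⟨ξ, hξ0, hξx, heq⟩ := hMVT
  have hp1' : (0:ℝ) < p - 1 := by linarith
  have habs : |ξ ^ (p-1) - x ^ (p-1)| ≤ |y| ^ (p - 1) := by
    calc |ξ ^ (p-1) - x ^ (p-1)| ≤ |ξ - x| ^ (p-1) :=
          my_abs_rpow_sub_le hp1' (by linarith) hξ0.le hx.le
    _ ≤ |y| ^ (p-1) := Real.rpow_le_rpow (abs_nonneg _) hξx hp1'.le
  have hyabs : (0:ℝ) < |y| := abs_pos.mpr hy0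
  have hyp : |y| ^ (p - 1) * |y| = |y| ^ p := by
    nth_rw 2 [← Real.rpow_one |y|]
    rw [← Real.rpow_add hyabs]; norm_num
  have key : (x + y) ^ p - x ^ p - p * x ^ (p-1) * y ≤ p * |y| ^ p := by
    rw [heq]
    have : p * ξ ^ (p-1) * y - p * x ^ (p-1) * y = p * ((ξ ^ (p-1) - x ^ (p-1)) * y) := by ring
    rw [this]
    have h1 : (ξ ^ (p-1) - x ^ (p-1)) * y ≤ |y| ^ (p-1) * |y| := by
      calc (ξ ^ (p-1) - x ^ (p-1)) * y ≤ |(ξ ^ (p-1) - x ^ (p-1)) * y| := le_abs_self _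
      _ = |ξ ^ (p-1) - x ^ (p-1)| * |y| := abs_mul _ _
      _ ≤ |y| ^ (p-1) * |y| := mul_le_mul_of_nonneg_right habs (abs_nonneg _)
    calc p * ((ξ ^ (p-1) - x ^ (p-1)) * y) ≤ p * (|y| ^ (p-1) * |y|) := by
          exact mul_le_mul_of_nonneg_left h1 (by linarith)
    _ = p * |y| ^ p := by rw [hyp]
  have hyP : (0:ℝ) ≤ |y| ^ p := Real.rpow_nonneg (abs_nonneg _) _
  nlinarith [key, hyP]

lemma my_key_ineq {p : ℝ} (hp1 : 1 < p) (hp2 : p ≤ 2) (x y : ℝ) :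
    |x + y| ^ p ≤ |x| ^ p + (p * x * |x| ^ (p - 2)) * y + 6 * |y| ^ p := by
  have hp0 : (0:ℝ) < p := by linarith
  rcases le_or_gt |x| |y| with hxy | hxy
  · -- small x case
    have h4 : |x + y| ^ p ≤ 4 * |y| ^ p := by
      have h1 : |x + y| ≤ 2 * |y| := by
        calc |x + y| ≤ |x| + |y| := abs_add_le x y
        _ ≤ 2 * |y| := by linarith
      calc |x + y| ^ p ≤ (2 * |y|) ^ p :=
            Real.rpow_le_rpow (abs_nonneg _) h1 hp0.le
      _ = 2 ^ p * |y| ^ p := Real.mul_rpow (by norm_num) (abs_nonneg _)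
      _ ≤ 4 * |y| ^ p := by
          have h2 : (2:ℝ) ^ p ≤ 2 ^ (2:ℝ) :=
            Real.rpow_le_rpow_of_exponent_le one_le_two hp2
          have h3 : (2:ℝ) ^ (2:ℝ) = 4 := by
            rw [show (2:ℝ) = ((2:ℕ):ℝ) by norm_num, Real.rpow_natCast]; norm_num
          have := Real.rpow_nonneg (abs_nonneg y) p
          nlinarith
    have hmid : |(p * x * |x| ^ (p - 2)) * y| ≤ 2 * |y| ^ p := by
      rcases eq_or_ne x 0 with rfl | hx0
      · simp [abs_zero]
        positivity
      · have hax : 0 < |x| := abs_pos.mpr hx0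
        have h5 : |x| * |x| ^ (p - 2) = |x| ^ (p - 1) := by
          nth_rw 1 [← Real.rpow_one |x|]
          rw [← Real.rpow_add hax]; congr 1; ring
        have h6 : |x| ^ (p - 1) ≤ |y| ^ (p - 1) :=
          Real.rpow_le_rpow (abs_nonneg _) hxy (by linarith)
        have h7 : |y| ^ (p - 1) * |y| = |y| ^ p := by
          rcases eq_or_ne y 0 with rfl | hy0
          · simp [Real.zero_rpow (by linarith : p - 1 ≠ 0),
              Real.zero_rpow hp0.ne']
          · nth_rw 2 [← Real.rpow_one |y|]
            rw [← Real.rpow_add (abs_pos.mpr hy0)]; norm_num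
        have h8 : |(p * x * |x| ^ (p - 2)) * y| = p * (|x| * |x| ^ (p - 2)) * |y| := by
          simp only [abs_mul, abs_abs, abs_of_pos hp0,
            abs_of_nonneg (Real.rpow_nonneg (abs_nonneg x) (p - 2))]
          ring
        rw [h8, h5]
        calc p * |x| ^ (p - 1) * |y| ≤ p * (|y| ^ (p - 1) * |y|) := by
              rw [mul_assoc]
              exact mul_le_mul_of_nonneg_left
                (mul_le_mul_of_nonneg_right h6 (abs_nonneg _)) hp0.le
        _ = p * |y| ^ p := by rw [h7]
        _ ≤ 2 * |y| ^ p :=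
            mul_le_mul_of_nonneg_right hp2 (Real.rpow_nonneg (abs_nonneg _) _)
    have hxp : (0:ℝ) ≤ |x| ^ p := Real.rpow_nonneg (abs_nonneg _) _
    have := neg_abs_le ((p * x * |x| ^ (p - 2)) * y)
    linarith
  · -- |y| < |x|
    have hypnn : (0:ℝ) ≤ |y| ^ p := Real.rpow_nonneg (abs_nonneg _) _
    rcases lt_or_gt_of_ne (abs_pos.mp (lt_of_le_of_lt (abs_nonneg y) hxy)).symm
      with hxpos | hxneg
    · have h := my_key_pos hp1 hp2 (x := x) (y := y) hxpos
        (by rwa [abs_of_pos hxpos] at hxy)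
      linarith
    · have hxneg' : x < 0 := hxneg
      have h := my_key_pos hp1 hp2 (x := -x) (y := -y) (by linarith)
        (by rw [abs_neg]; rwa [abs_of_neg hxneg'] at hxy)
      rw [show -x + -y = -(x + y) by ring, abs_neg, abs_neg, abs_neg] at h
      have heq : p * -x * |x| ^ (p - 2) * -y = p * x * |x| ^ (p - 2) * y := by ring
      rw [heq] at h
      linarith

lemma my_gbound {p : ℝ} (hp1 : 1 < p) (hp2 : p ≤ 2) (t : ℝ) :
    |p * t * |t| ^ (p - 2)| ≤ p * (1 + |t| ^ p) := by
  have hp0 : (0:ℝ) < p := by linarith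
  rcases eq_or_ne t 0 with rfl | ht
  · simp [abs_zero]
    positivity
  · have hat : 0 < |t| := abs_pos.mpr ht
    have h5 : |t| * |t| ^ (p - 2) = |t| ^ (p - 1) := by
      nth_rw 1 [← Real.rpow_one |t|]
      rw [← Real.rpow_add hat]; congr 1; ring
    have h8 : |p * t * |t| ^ (p - 2)| = p * (|t| * |t| ^ (p - 2)) := by
      simp only [abs_mul, abs_abs, abs_of_pos hp0,
        abs_of_nonneg (Real.rpow_nonneg (abs_nonneg t) (p - 2))]
      ring
    rw [h8, h5]
    have h9 : |t| ^ (p - 1) ≤ 1 + |t| ^ p := by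
      rcases le_or_gt |t| 1 with h | h
      · have := Real.rpow_le_one (abs_nonneg t) h (by linarith : (0:ℝ) ≤ p - 1)
        have := Real.rpow_nonneg (abs_nonneg t) p
        linarith
      · have := Real.rpow_le_rpow_of_exponent_le h.le (by linarith : p - 1 ≤ p)
        linarith
    exact mul_le_mul_of_nonneg_left h9 hp0.le

lemma my_step {Ω : Type} [MeasureSpace Ω] [IsProbabilityMeasure (ℙ : Measure Ω)]
    {p : ℝ} (hp1 : 1 < p) (hp2 : p ≤ 2) {X Z : Ω → ℝ}
    (hXm : Measurable X) (hZm : Measurable Z)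
    (hX : MemLp X (ENNReal.ofReal p) ℙ) (hZ : MemLp Z (ENNReal.ofReal p) ℙ)
    (hind : IndepFun X Z ℙ) (hZ0 : ∫ ω, Z ω = 0) :
    ∫ ω, |X ω + Z ω| ^ p ≤ (∫ ω, |X ω| ^ p) + 6 * ∫ ω, |Z ω| ^ p := by
  have hp0 : (0:ℝ) < p := by linarith
  have hq0 : ENNReal.ofReal p ≠ 0 := by
    simp only [ne_eq, ENNReal.ofReal_eq_zero, not_le]; linarith
  have hqt : ENNReal.ofReal p ≠ ⊤ := ENNReal.ofReal_ne_top
  have h1q : 1 ≤ ENNReal.ofReal p := by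
    rw [← ENNReal.ofReal_one]; exact ENNReal.ofReal_le_ofReal hp1.le
  have htoReal : (ENNReal.ofReal p).toReal = p := ENNReal.toReal_ofReal hp0.le
  have iX : Integrable (fun ω => |X ω| ^ p) ℙ := by
    have := hX.integrable_norm_rpow hq0 hqt
    simpa [Real.norm_eq_abs, htoReal] using this
  have iZ : Integrable (fun ω => |Z ω| ^ p) ℙ := by
    have := hZ.integrable_norm_rpow hq0 hqt
    simpa [Real.norm_eq_abs, htoReal] using this
  have iXZ : Integrable (fun ω => |X ω + Z ω| ^ p) ℙ := by
    have := (hX.add hZ).integrable_norm_rpow hq0 hqt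
    simpa [Real.norm_eq_abs, htoReal] using this
  set g : ℝ → ℝ := fun t => p * t * |t| ^ (p - 2) with hg
  have gmeas : Measurable g :=
    (measurable_const.mul measurable_id).mul (measurable_id.abs.pow measurable_const)
  have igX : Integrable (fun ω => g (X ω)) ℙ := by
    refine Integrable.mono' (((integrable_const (1:ℝ)).add iX).const_mul p)
      ((gmeas.comp hXm).aestronglyMeasurable) ?_
    filter_upwards with ω
    simpa [Real.norm_eq_abs, hg] using my_gbound hp1 hp2 (X ω)
  have iZint : Integrable Z ℙ := hZ.integrable h1q
  have hindg : IndepFun (g ∘ X) (id ∘ Z) ℙ := hind.comp gmeas measurable_id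
  have ipr : Integrable (fun ω => g (X ω) * Z ω) ℙ := by
    have := hindg.integrable_mul igX iZint
    exact this
  have izero : ∫ ω, g (X ω) * Z ω = 0 := by
    have h := hindg.integral_mul_eq_mul_integral
      (by exact igX.aestronglyMeasurable)
      (by simpa using iZint.aestronglyMeasurable)
    calc ∫ ω, g (X ω) * Z ω = integral ℙ (g ∘ X * id ∘ Z) := rfl
    _ = integral ℙ (g ∘ X) * integral ℙ (id ∘ Z) := h
    _ = (∫ ω, g (X ω)) * ∫ ω, Z ω := rfl
    _ = 0 := by rw [hZ0, mul_zero]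
  calc ∫ ω, |X ω + Z ω| ^ p
      ≤ ∫ ω, (|X ω| ^ p + (g (X ω) * Z ω + 6 * |Z ω| ^ p)) := by
        refine integral_mono iXZ (iX.add (ipr.add (iZ.const_mul 6))) fun ω => ?_
        have := my_key_ineq hp1 hp2 (X ω) (Z ω)
        simp only [hg]
        linarith
    _ = (∫ ω, |X ω| ^ p) + ((∫ ω, g (X ω) * Z ω) + 6 * ∫ ω, |Z ω| ^ p) := by
        rw [integral_add (f := fun ω => |X ω| ^ p)
            (g := fun ω => g (X ω) * Z ω + 6 * |Z ω| ^ p) iX (ipr.add (iZ.const_mul 6)),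
          integral_add (f := fun ω => g (X ω) * Z ω) (g := fun ω => 6 * |Z ω| ^ p) ipr
            (iZ.const_mul 6),
          integral_const_mul]
    _ = (∫ ω, |X ω| ^ p) + 6 * ∫ ω, |Z ω| ^ p := by rw [izero]; ring

lemma my_iIndep_congr {Ω ι : Type*} {mΩ : MeasurableSpace Ω} {μ : Measure Ω} {β : ι → Type*}
    {m : ∀ i, MeasurableSpace (β i)} {f g : ∀ i, Ω → β i}
    (hf : iIndepFun (m := m) f μ) (h : ∀ i, f i =ᵐ[μ] g i) : iIndepFun (m := m) g μ := by
  rw [iIndepFun_iff_measure_inter_preimage_eq_mul] at hf ⊢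
  intro S sets H
  have hae : ∀ᵐ ω ∂μ, ∀ i ∈ (↑S : Set ι), f i ω = g i ω :=
    (MeasureTheory.ae_ball_iff S.countable_toSet).2 fun i _ => h i
  have h2 : μ (⋂ i ∈ S, g i ⁻¹' sets i) = μ (⋂ i ∈ S, f i ⁻¹' sets i) := by
    refine measure_congr ?_
    rw [Filter.eventuallyEq_set]
    filter_upwards [hae] with ω hω
    simp only [Set.mem_iInter, Set.mem_preimage]
    exact ⟨fun H' i hi => by rw [hω i (Finset.mem_coe.2 hi)]; exact H' i hi,
      fun H' i hi => by rw [← hω i (Finset.mem_coe.2 hi)]; exact H' i hi⟩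
  rw [h2, hf S H]
  refine Finset.prod_congr rfl fun i hi => ?_
  refine measure_congr ?_
  rw [Filter.eventuallyEq_set]
  filter_upwards [h i] with ω hω
  simp only [Set.mem_preimage, hω]

lemma my_sum_bound {Ω : Type} [MeasureSpace Ω] [IsProbabilityMeasure (ℙ : Measure Ω)]
    {p : ℝ} (hp1 : 1 < p) (hp2 : p ≤ 2) {n : ℕ} {Y : Fin n → Ω → ℝ}
    (hm : ∀ k, Measurable (Y k))
    (hind : iIndepFun Y ℙ)
    (hLp : ∀ k, MemLp (Y k) (ENNReal.ofReal p) ℙ) (h0 : ∀ k, ∫ ω, Y k ω = 0)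
    (s : Finset (Fin n)) :
    ∫ ω, |∑ k ∈ s, Y k ω| ^ p ≤ 6 * ∑ k ∈ s, ∫ ω, |Y k ω| ^ p := by
  have hp0 : (0:ℝ) < p := by linarith
  induction s using Finset.induction with
  | empty => simp [Real.zero_rpow hp0.ne']
  | @insert a s hns ih =>
    have hXm : Measurable fun ω => ∑ k ∈ s, Y k ω :=
      Finset.measurable_sum s fun k _ => hm k
    have hXLp : MemLp (fun ω => ∑ k ∈ s, Y k ω) (ENNReal.ofReal p) ℙ := by
      have := memLp_finset_sum' s fun k _ => hLp k
      rwa [show (∑ i ∈ s, Y i) = fun ω => ∑ k ∈ s, Y k ω from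
        funext fun ω => Finset.sum_apply ω s Y] at this
    have hind' : IndepFun (fun ω => ∑ k ∈ s, Y k ω) (Y a) ℙ := by
      have := hind.indepFun_finsetSum_of_notMem hm hns
      have he : (∑ j ∈ s, Y j) = fun ω => ∑ k ∈ s, Y k ω := by
        funext ω; exact Finset.sum_apply ω s Y
      rwa [he] at this
    have hstep := my_step hp1 hp2 hXm (hm a) hXLp (hLp a) hind' (h0 a)
    have hrw : ∀ ω : Ω, ∑ k ∈ insert a s, Y k ω = (∑ k ∈ s, Y k ω) + Y a ω := by
      intro ω; rw [Finset.sum_insert hns]; ring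
    simp_rw [hrw, Finset.sum_insert hns]
    linarith


/-- Scalar martingale type-`p` inequality for sums of independent centered random
variables: for `1 < p ≤ 2` there is a constant `C(p)` such that
`E[|∑ Y_k|^p] ≤ C(p) ∑ E[|Y_k|^p]`. -/
theorem stmt5 (p : ℝ) (hp1 : 1 < p) (hp2 : p ≤ 2) :
    ∃ C : ℝ, 0 < C ∧
      ∀ (Ω : Type) (_ : MeasureSpace Ω) (_ : IsProbabilityMeasure (ℙ : Measure Ω))
        (m : ℕ) (Y : Fin (m + 1) → Ω → ℝ),
        iIndepFun Y ℙ →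
        (∀ k, MemLp (Y k) (ENNReal.ofReal p) ℙ) →
        (∀ k, ∫ ω, Y k ω = 0) →
        ∫ ω, |∑ k, Y k ω| ^ p ≤ C * ∑ k, ∫ ω, |Y k ω| ^ p := by

  refine ⟨6, by norm_num, ?_⟩
  intro Ω _ _ m Y hind hLp h0
  -- replace Y by a measurable modification
  set Y' : Fin (m + 1) → Ω → ℝ := fun k => ((hLp k).1).mk (Y k) with hY'
  have hae : ∀ k, Y k =ᵐ[ℙ] Y' k := fun k => ((hLp k).1).ae_eq_mk
  have hm' : ∀ k, Measurable (Y' k) := fun k => ((hLp k).1).stronglyMeasurable_mk.measurable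
  have hind' : iIndepFun Y' ℙ := my_iIndep_congr hind hae
  have hLp' : ∀ k, MemLp (Y' k) (ENNReal.ofReal p) ℙ := fun k => (hLp k).ae_eq (hae k)
  have h0' : ∀ k, ∫ ω, Y' k ω = 0 := fun k => by
    rw [← integral_congr_ae (hae k)]; exact h0 k
  have key := my_sum_bound hp1 hp2 hm' hind' hLp' h0' Finset.univ
  have e1 : ∫ ω, |∑ k, Y k ω| ^ p = ∫ ω, |∑ k, Y' k ω| ^ p := by
    refine integral_congr_ae ?_
    have : ∀ᵐ ω ∂ℙ, ∀ k, Y k ω = Y' k ω := by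
      rw [MeasureTheory.ae_all_iff]
      exact hae
    filter_upwards [this] with ω hω
    rw [Finset.sum_congr rfl fun k _ => hω k]
  have e2 : ∀ k, ∫ ω, |Y k ω| ^ p = ∫ ω, |Y' k ω| ^ p := fun k => by
    refine integral_congr_ae ?_
    filter_upwards [hae k] with ω hω
    rw [hω]
  rw [e1, Finset.sum_congr rfl fun k _ => e2 k]
  exact key
end
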